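/- For every real ξ, |sin ξ| = ∑_{k ∈ ℤ} g(ξ - kπ), where g(ξ) = (1/2) sin|ξ| + (1/2) sin|ξ - π|, and the series converges (for each ξ only finitely many terms are nonzero on any bounded set, and the full sum converges pointwise). -/
import Mathlib


open Real

theorem stmt_2 (g : ℝ → ℝ)
    (hg : g = fun ξ => (1 / 2) * Real.sin |ξ| + (1 / 2) * Real.sin |ξ - π|)
    (ξ : ℝ) :
    HasSum (fun k : ℤ => g (ξ - k * π)) |Real.sin ξ| := by
  have hπ : (0:ℝ) < π := Real.pi_pos
  have hneg : ∀ x : ℝ, x ≤ 0 → g x = 0 := by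
    intro x hx
    have h1 : |x| = -x := abs_of_nonpos hx
    have h2 : |x - π| = π - x := by
      rw [abs_of_nonpos (by linarith)]; ring
    simp only [hg, h1, h2, Real.sin_neg, Real.sin_pi_sub]
    ring
  have hbig : ∀ x : ℝ, π ≤ x → g x = 0 := by
    intro x hx
    have h1 : |x| = x := abs_of_nonneg (by linarith)
    have h2 : |x - π| = x - π := abs_of_nonneg (by linarith)
    simp only [hg, h1, h2, Real.sin_sub_pi]
    ring
  set n : ℤ := ⌊ξ / π⌋ with hn
  have h1 : (n:ℝ) * π ≤ ξ := by
    have := Int.floor_le (ξ / π)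
    calc (n:ℝ) * π ≤ (ξ / π) * π := by nlinarith
    _ = ξ := by field_simp
  have h2 : ξ < (n:ℝ) * π + π := by
    have h := Int.lt_floor_add_one (ξ / π)
    nlinarith [(div_lt_iff₀ hπ).mp (by linarith : ξ / π < (n:ℝ) + 1)]
  have key : (fun k : ℤ => g (ξ - k * π)) = fun k : ℤ => if k = n then |Real.sin ξ| else 0 := by
    funext k
    by_cases hk : k = n
    · rw [if_pos hk, hk]
      have ht0 : 0 ≤ ξ - (n:ℝ) * π := by linarith
      have htπ : ξ - (n:ℝ) * π < π := by linarith
      have ha : |ξ - (n:ℝ) * π| = ξ - (n:ℝ) * π := abs_of_nonneg ht0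
      have hb : |ξ - (n:ℝ) * π - π| = π - (ξ - (n:ℝ) * π) := by
        rw [abs_of_nonpos (by linarith)]; ring
      have hs : Real.sin ξ = (-1)^n * Real.sin (ξ - (n:ℝ) * π) := by
        have := Real.sin_add_int_mul_pi (ξ - (n:ℝ) * π) n
        rw [← this]; ring_nf
      have habs : |Real.sin ξ| = Real.sin (ξ - (n:ℝ) * π) := by
        rw [hs, abs_mul]
        rw [abs_of_nonneg (Real.sin_nonneg_of_nonneg_of_le_pi ht0 (le_of_lt htπ))]
        have : |((-1:ℝ)) ^ n| = 1 := by
          rcases Int.even_or_odd n with he | ho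
          · rw [he.neg_one_zpow]; norm_num
          · rw [ho.neg_one_zpow]; norm_num
        rw [this, one_mul]
      rw [habs]
      simp only [hg, ha, hb, Real.sin_pi_sub]
      ring
    · rw [if_neg hk]
      rcases lt_or_gt_of_ne hk with h | h
      · apply hbig
        have : (k:ℝ) + 1 ≤ (n:ℝ) := by exact_mod_cast h
        nlinarith
      · apply hneg
        have : (n:ℝ) + 1 ≤ (k:ℝ) := by exact_mod_cast h
        nlinarith
  rw [key]
  exact hasSum_ite_eq n |Real.sin ξ|
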